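/- Let r be a positive integer, let G' be a correctly gadgeted graph for parameter r, and let χ : V(G') → ℕ be a labeling that is a distance-2 coloring and is edge-consistent in every r-gball. Let v be an original vertex of G'. Then there is no triple of vertices u1, u2, u3 in gball_r(v) with {u1,u2}, {u1,u3}, {u2,u3} ∈ E(G') and χ(u1) = χ(v); i.e., no vertex lying on a triangle inside gball_r(v) has the same color as the original vertex v. -/

import Mathlib

open scoped ENNReal

namespace LCLGadget

/-- Adjacency relation (one direction) of the A-gadget, on vertex indices `0,…,5`
representing the paper's vertices `1,…,6`. -/
def AAdj (i j : Fin 6) : Prop :=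
  (i, j) ∈ ([(0,1),(0,2),(1,2),(1,3),(2,4),(3,4),(3,5),(4,5)] : List (Fin 6 × Fin 6))

variable {V : Type} [LinearOrder V]

/-- The gadget vertices of the gadgeted graph `gadget(G, x)`: a vertex `⟨(a,b,i,j), _⟩`
is vertex `j` of the `i`-th A-gadget on the expanded edge replacing the edge `{a,b}`
(oriented so that `a < b`). -/
abbrev GadgetAux (G : SimpleGraph V) (x : Sym2 V → ℕ) : Type :=
  {p : V × V × ℕ × Fin 6 //
    p.1 < p.2.1 ∧ G.Adj p.1 p.2.1 ∧ p.2.2.1 < x s(p.1, p.2.1)}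

/-- Vertices of the gadgeted graph: original vertices (`Sum.inl`) and gadget
vertices (`Sum.inr`). -/
abbrev GadgetVert (G : SimpleGraph V) (x : Sym2 V → ℕ) : Type :=
  V ⊕ GadgetAux G x

/-- Base adjacency relation of the gadgeted graph (to be symmetrized):
vertex `0` (paper's `1`) of the first gadget is joined to the smaller endpoint,
vertex `5` (paper's `6`) of the last gadget is joined to the larger endpoint,
within one gadget the A-gadget edges are used, and consecutive gadgets of a chain
are joined by an edge from vertex `5` to vertex `0`. -/
def gadgetRel (G : SimpleGraph V) (x : Sym2 V → ℕ) :
    GadgetVert G x → GadgetVert G x → Prop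
  | Sum.inl sv, Sum.inr ⟨⟨a, b, i, j⟩, _⟩ =>
      (sv = a ∧ i = 0 ∧ j = 0) ∨ (sv = b ∧ i = x s(a, b) - 1 ∧ j = 5)
  | Sum.inr ⟨⟨a, b, i, j⟩, _⟩, Sum.inr ⟨⟨a', b', i', j'⟩, _⟩ =>
      a = a' ∧ b = b' ∧ ((i = i' ∧ AAdj j j') ∨ (i' = i + 1 ∧ j = 5 ∧ j' = 0))
  | _, _ => False

/-- The gadgeted graph `G' = gadget(G, x)`. -/
def gadgetGraph (G : SimpleGraph V) (x : Sym2 V → ℕ) : SimpleGraph (GadgetVert G x) :=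
  SimpleGraph.fromRel (gadgetRel G x)

/-- Weight of a (potential) edge of the gadgeted graph: `1/2` if it is incident to an
original vertex, `0` otherwise. -/
noncomputable def wt (G : SimpleGraph V) (x : Sym2 V → ℕ) :
    GadgetVert G x → GadgetVert G x → ℝ≥0∞
  | Sum.inl _, _ => 1/2
  | _, Sum.inl _ => 1/2
  | _, _ => 0

/-- The gadgeted distance `gdist(u,v)`: the minimum total weight of a path
from `u` to `v` in the gadgeted graph. -/
noncomputable def gdist (G : SimpleGraph V) (x : Sym2 V → ℕ) (u v : GadgetVert G x) : ℝ≥0∞ :=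
  ⨅ p : (gadgetGraph G x).Walk u v,
    (p.darts.map fun d => wt G x d.toProd.1 d.toProd.2).sum

/-- Membership of a vertex `u` in the `r`-gball around `c`. -/
def inGball (G : SimpleGraph V) (x : Sym2 V → ℕ) (r : ℕ) (c u : GadgetVert G x) : Prop :=
  gdist G x c u ≤ (r : ℝ≥0∞)

/-- `u` is an original vertex of the gadgeted graph. -/
def IsOriginal (G : SimpleGraph V) (x : Sym2 V → ℕ) (u : GadgetVert G x) : Prop :=
  ∃ v : V, u = Sum.inl v

/-- `u` is an outer vertex: a gadget vertex adjacent to an original vertex. -/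
def IsOuter (G : SimpleGraph V) (x : Sym2 V → ℕ) (u : GadgetVert G x) : Prop :=
  (∃ p, u = Sum.inr p) ∧ ∃ w, IsOriginal G x w ∧ (gadgetGraph G x).Adj u w

/-- `u` is an inner vertex: a gadget vertex not adjacent to any original vertex. -/
def IsInner (G : SimpleGraph V) (x : Sym2 V → ℕ) (u : GadgetVert G x) : Prop :=
  (∃ p, u = Sum.inr p) ∧ ¬ ∃ w, IsOriginal G x w ∧ (gadgetGraph G x).Adj u w

/-- `G` is a 3-regular graph. -/
def ThreeRegular (G : SimpleGraph V) : Prop :=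
  ∀ v : V, (G.neighborSet v).ncard = 3

/-- The edge labeling `x` takes positive values on all edges. -/
def PosLabels (G : SimpleGraph V) (x : Sym2 V → ℕ) : Prop :=
  ∀ e ∈ G.edgeSet, 0 < x e

/-- `x` is a distance-`2r` edge coloring of `G`: any two distinct edges of `G` at
distance at most `2r` from each other receive distinct labels. -/
def DistEdgeColoring (G : SimpleGraph V) (x : Sym2 V → ℕ) (r : ℕ) : Prop :=
  ∀ e ∈ G.edgeSet, ∀ f ∈ G.edgeSet, e ≠ f →
    (∃ a ∈ e, ∃ b ∈ f, G.edist a b ≤ (2 * r : ℕ)) → x e ≠ x f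

/-- The gadgeted graph `gadget(G,x)` is correctly gadgeted for parameter `r`. -/
def CorrectlyGadgeted (G : SimpleGraph V) (x : Sym2 V → ℕ) (r : ℕ) : Prop :=
  ThreeRegular G ∧ PosLabels G x ∧ DistEdgeColoring G x r

/-- `χ` is a distance-2 coloring of the gadgeted graph:
it is injective on `{v} ∪ N(v)` for every vertex `v`. -/
def Dist2Coloring (G : SimpleGraph V) (x : Sym2 V → ℕ) (χ : GadgetVert G x → ℕ) : Prop :=
  ∀ v : GadgetVert G x, Set.InjOn χ (insert v ((gadgetGraph G x).neighborSet v))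

/-- `χ` is edge-consistent in every `r`-gball: whenever `{v,u}` is an edge and
`v' ∈ gball_r(v)` has `χ(v') = χ(v)`, there is a neighbor `u'` of `v'` with
`χ(u') = χ(u)`. -/
def EdgeConsistent (G : SimpleGraph V) (x : Sym2 V → ℕ) (r : ℕ)
    (χ : GadgetVert G x → ℕ) : Prop :=
  ∀ v u : GadgetVert G x, (gadgetGraph G x).Adj v u →
    ∀ v', inGball G x r v v' → χ v' = χ v →
      ∃ u', (gadgetGraph G x).Adj v' u' ∧ χ u' = χ u

/-- `u` lies on a triangle (cycle of length 3) of the gadgeted graph. -/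
def OnTriangle (G : SimpleGraph V) (x : Sym2 V → ℕ) (u : GadgetVert G x) : Prop :=
  ∃ a b, (gadgetGraph G x).Adj u a ∧ (gadgetGraph G x).Adj u b ∧ (gadgetGraph G x).Adj a b

end LCLGadget

namespace LCLGadgetThms
open LCLGadget

variable {V : Type} [LinearOrder V]

open SimpleGraph Sum

variable {V : Type} [LinearOrder V] {G : SimpleGraph V} {x : Sym2 V → ℕ}

lemma rel_to_inl (w : GadgetVert G x) (a : V) : ¬ gadgetRel G x w (Sum.inl a) := by
  cases w <;> simp [gadgetRel]

lemma rel_inl_inr (sv : V) (q : GadgetAux G x) :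
    gadgetRel G x (Sum.inl sv) (Sum.inr q) ↔
      ((sv = q.1.1 ∧ q.1.2.2.1 = 0 ∧ q.1.2.2.2 = 0) ∨
       (sv = q.1.2.1 ∧ q.1.2.2.1 = x s(q.1.1, q.1.2.1) - 1 ∧ q.1.2.2.2 = 5)) := by
  obtain ⟨⟨a,b,i,j⟩,h⟩ := q
  simp [gadgetRel]

lemma rel_inr_inr (p q : GadgetAux G x) :
    gadgetRel G x (Sum.inr p) (Sum.inr q) ↔
      (p.1.1 = q.1.1 ∧ p.1.2.1 = q.1.2.1 ∧
        ((p.1.2.2.1 = q.1.2.2.1 ∧ AAdj p.1.2.2.2 q.1.2.2.2) ∨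
         (q.1.2.2.1 = p.1.2.2.1 + 1 ∧ p.1.2.2.2 = 5 ∧ q.1.2.2.2 = 0))) := by
  obtain ⟨⟨a,b,i,j⟩,h⟩ := p
  obtain ⟨⟨a',b',i',j'⟩,h'⟩ := q
  simp [gadgetRel]

lemma not_adj_inl_inl (a b : V) : ¬ (gadgetGraph G x).Adj (Sum.inl a) (Sum.inl b) := by
  rw [gadgetGraph, fromRel_adj]
  rintro ⟨-, h | h⟩ <;> exact rel_to_inl _ _ h

example (a b : GadgetVert G x) : (gadgetGraph G x).Adj a b ↔ a ≠ b ∧ (gadgetRel G x a b ∨ gadgetRel G x b a) := by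
  rw [gadgetGraph, fromRel_adj]
open SimpleGraph Sum Walk

variable {V : Type} [LinearOrder V] {G : SimpleGraph V} {x : Sym2 V → ℕ}

lemma wt_inl_left (a : V) (w : GadgetVert G x) : wt G x (Sum.inl a) w = 1/2 := by
  cases w <;> rfl

lemma wt_inr_inl (p : GadgetAux G x) (a : V) : wt G x (Sum.inr p) (Sum.inl a) = 1/2 := rfl

lemma wt_inr_inr (p q : GadgetAux G x) : wt G x (Sum.inr p) (Sum.inr q) = 0 := rfl

lemma wt_zero_of_inr {u w : GadgetVert G x} (hu : ∃ p, u = Sum.inr p) (hw : ∃ p, w = Sum.inr p) :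
    wt G x u w = 0 := by
  obtain ⟨_, rfl⟩ := hu
  obtain ⟨_, rfl⟩ := hw
  rfl

lemma wt_half_right {u : GadgetVert G x} (hu : ∃ p, u = Sum.inr p) (a : V) :
    wt G x u (Sum.inl a) = 1/2 := by
  obtain ⟨_, rfl⟩ := hu
  rfl

lemma wt_symm (a b : GadgetVert G x) : wt G x a b = wt G x b a := by
  cases a <;> cases b <;> rfl

noncomputable def wWeight {u v : GadgetVert G x} (p : (gadgetGraph G x).Walk u v) : ℝ≥0∞ :=
  (p.darts.map fun d => wt G x d.toProd.1 d.toProd.2).sum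

lemma gdist_eq (u v : GadgetVert G x) : gdist G x u v = ⨅ p : (gadgetGraph G x).Walk u v, wWeight p := rfl

lemma gdist_le {u v : GadgetVert G x} (p : (gadgetGraph G x).Walk u v) : gdist G x u v ≤ wWeight p :=
  iInf_le _ _

lemma wWeight_nil {u : GadgetVert G x} : wWeight (Walk.nil : (gadgetGraph G x).Walk u u) = 0 := by
  simp [wWeight]

lemma wWeight_cons {u v w : GadgetVert G x} (h : (gadgetGraph G x).Adj u v)
    (p : (gadgetGraph G x).Walk v w) :
    wWeight (Walk.cons h p) = wt G x u v + wWeight p := by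
  simp [wWeight]

lemma wWeight_append {u v w : GadgetVert G x} (p : (gadgetGraph G x).Walk u v)
    (q : (gadgetGraph G x).Walk v w) :
    wWeight (p.append q) = wWeight p + wWeight q := by
  simp [wWeight, Walk.darts_append]

lemma wWeight_reverse {u v : GadgetVert G x} (p : (gadgetGraph G x).Walk u v) :
    wWeight p.reverse = wWeight p := by
  have h : ∀ d : (gadgetGraph G x).Dart,
      wt G x d.symm.toProd.1 d.symm.toProd.2 = wt G x d.toProd.1 d.toProd.2 := by
    intro d; exact wt_symm _ _
  simp only [wWeight, Walk.darts_reverse, List.map_reverse, List.sum_reverse, List.map_map]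
  congr 1
  exact List.map_congr_left fun d _ => h d

lemma gdist_comm (u v : GadgetVert G x) : gdist G x u v = gdist G x v u := by
  have key : ∀ (a b : GadgetVert G x), gdist G x a b ≤ gdist G x b a := by
    intro a b
    rw [gdist_eq a b, gdist_eq b a]
    exact le_iInf fun p => (iInf_le _ p.reverse).trans (le_of_eq (wWeight_reverse p))
  exact le_antisymm (key u v) (key v u)
def side : GadgetVert G x → ℕ
  | Sum.inl _ => 1
  | Sum.inr _ => 0

lemma exists_nat_weight : ∀ {u v₀ : GadgetVert G x} (p : (gadgetGraph G x).Walk u v₀),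
    ∃ n : ℕ, wWeight p = (n : ℝ≥0∞)/2 ∧ n % 2 = (side u + side v₀) % 2 := by
  intro u v₀ p
  induction p with
  | nil => exact ⟨0, by simp [wWeight_nil], by omega⟩
  | @cons a b c h p ih =>
    obtain ⟨m, hm, hmod⟩ := ih
    rw [wWeight_cons, hm]
    cases a with
    | inl va =>
      cases b with
      | inl vb => exact absurd h (not_adj_inl_inl _ _)
      | inr pb =>
        refine ⟨m + 1, ?_, ?_⟩
        · rw [wt_inl_left]
          rw [ENNReal.div_add_div_same]
          congr 1
          push_cast
          ring
        · simp only [side] at hmod ⊢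
          omega
    | inr pa =>
      cases b with
      | inl vb =>
        refine ⟨m + 1, ?_, ?_⟩
        · rw [wt_inr_inl, ENNReal.div_add_div_same]
          congr 1
          push_cast
          ring
        · simp only [side] at hmod ⊢
          omega
      | inr pb =>
        refine ⟨m, ?_, ?_⟩
        · rw [wt_inr_inr, zero_add]
        · simp only [side] at hmod ⊢
          omega

lemma two_cast_div (n : ℕ) : ((2 * n : ℕ) : ℝ≥0∞) / 2 = (n : ℝ≥0∞) := by
  push_cast
  rw [mul_comm, mul_div_assoc, ENNReal.div_self two_ne_zero ENNReal.ofNat_ne_top, mul_one]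

lemma exists_walk_small {v : V} {pp : GadgetAux G x} {r : ℕ} (hr : 0 < r)
    (h : gdist G x (Sum.inl v) (Sum.inr pp) ≤ (r : ℝ≥0∞)) :
    ∃ p : (gadgetGraph G x).Walk (Sum.inl v) (Sum.inr pp),
      wWeight p ≤ ((2 * r - 1 : ℕ) : ℝ≥0∞) / 2 := by
  have hlt : gdist G x (Sum.inl v) (Sum.inr pp) < ((2 * r + 1 : ℕ) : ℝ≥0∞) / 2 := by
    refine lt_of_le_of_lt h ?_
    have h1 : ((2 * r + 1 : ℕ) : ℝ≥0∞) / 2 = (r : ℝ≥0∞) + 1/2 := by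
      push_cast
      rw [ENNReal.add_div]
      congr 1
      rw [mul_comm, mul_div_assoc, ENNReal.div_self two_ne_zero ENNReal.ofNat_ne_top, mul_one]
    rw [h1]
    exact ENNReal.lt_add_right (ENNReal.natCast_ne_top r) (by norm_num)
  rw [gdist_eq, iInf_lt_iff] at hlt
  obtain ⟨p, hp⟩ := hlt
  obtain ⟨n, hn, hpar⟩ := exists_nat_weight p
  simp only [side] at hpar
  refine ⟨p, ?_⟩
  rw [hn] at hp ⊢
  have hnlt : n < 2 * r + 1 := by
    by_contra hcon
    push_neg at hcon
    have : ((2 * r + 1 : ℕ) : ℝ≥0∞) / 2 ≤ (n : ℝ≥0∞) / 2 :=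
      ENNReal.div_le_div_right (by exact_mod_cast hcon) 2
    exact absurd (lt_of_le_of_lt this hp) (lt_irrefl _)
  have : n ≤ 2 * r - 1 := by omega
  exact ENNReal.div_le_div_right (by exact_mod_cast this) 2
instance AAdj.dec (i j : Fin 6) : Decidable (AAdj i j) := by
  unfold AAdj; infer_instance

lemma adj_iff (u v : GadgetVert G x) :
    (gadgetGraph G x).Adj u v ↔ u ≠ v ∧ (gadgetRel G x u v ∨ gadgetRel G x v u) := by
  rw [gadgetGraph, fromRel_adj]

lemma inl_adj_elim (w : V) (n : GadgetVert G x) (hadj : (gadgetGraph G x).Adj (Sum.inl w) n) :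
    ∃ q : GadgetAux G x, n = Sum.inr q ∧
      ((q.1.1 = w ∧ q.1.2.2.1 = 0 ∧ q.1.2.2.2 = 0) ∨
       (q.1.2.1 = w ∧ q.1.2.2.1 = x s(q.1.1, q.1.2.1) - 1 ∧ q.1.2.2.2 = 5)) := by
  rw [adj_iff] at hadj
  obtain ⟨-, h | h⟩ := hadj
  · cases n with
    | inl s => exact absurd h (rel_to_inl _ _)
    | inr q =>
      refine ⟨q, rfl, ?_⟩
      rw [rel_inl_inr] at h
      rcases h with ⟨h1, h2, h3⟩ | ⟨h1, h2, h3⟩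
      · exact Or.inl ⟨h1.symm, h2, h3⟩
      · exact Or.inr ⟨h1.symm, h2, h3⟩
  · exact absurd h (rel_to_inl _ _)

lemma no_triangle_original (w : V) (y z : GadgetVert G x)
    (hy : (gadgetGraph G x).Adj (Sum.inl w) y) (hz : (gadgetGraph G x).Adj (Sum.inl w) z)
    (hyz : (gadgetGraph G x).Adj y z) : False := by
  obtain ⟨⟨⟨a, b, i, j⟩, h⟩, rfl, hy'⟩ := inl_adj_elim w y hy
  obtain ⟨⟨⟨a', b', i', j'⟩, h'⟩, rfl, hz'⟩ := inl_adj_elim w z hz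
  rw [adj_iff] at hyz
  obtain ⟨-, hrel | hrel⟩ := hyz <;> rw [rel_inr_inr] at hrel <;>
    obtain ⟨ha, hb, hc⟩ := hrel <;>
    simp only at ha hb hc hy' hz' <;>
    rcases hy' with ⟨e1, e2, e3⟩ | ⟨e1, e2, e3⟩ <;>
    rcases hz' with ⟨f1, f2, f3⟩ | ⟨f1, f2, f3⟩ <;>
    subst e1 e3 f1 f3 <;>
    first
      | (exact absurd hc (by subst ha hb e2 f2; decide))
      | (exact absurd h'.1 (by subst ha hb; exact lt_irrefl _))
      | (exact absurd h.1 (by subst ha hb; exact lt_irrefl _))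
      | (exact absurd hc (by
          subst e2 f2
          rintro (⟨-, hA⟩ | ⟨-, h5, h0⟩)
          · exact absurd hA (by decide)
          · first
            | exact absurd h5 (by decide)
            | exact absurd h0 (by decide)))
lemma gadget_adj_elim {a b : V} {i : ℕ} {hab : a < b ∧ G.Adj a b ∧ i < x s(a, b)}
    (j0 : Fin 6) (n : GadgetVert G x)
    (hadj : (gadgetGraph G x).Adj (Sum.inr ⟨(a, b, i, j0), hab⟩) n) :
    (n = Sum.inl a ∧ i = 0 ∧ j0 = 0) ∨
    (n = Sum.inl b ∧ i = x s(a, b) - 1 ∧ j0 = 5) ∨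
    (∃ q : GadgetAux G x, n = Sum.inr q ∧
      ∃ j' : Fin 6, q.1 = (a, b, i, j') ∧ (AAdj j0 j' ∨ AAdj j' j0)) ∨
    (∃ q : GadgetAux G x, n = Sum.inr q ∧ q.1 = (a, b, i + 1, 0) ∧ j0 = 5) ∨
    (∃ q : GadgetAux G x, n = Sum.inr q ∧ ∃ i'' : ℕ, i = i'' + 1 ∧ q.1 = (a, b, i'', 5) ∧ j0 = 0) := by
  rw [adj_iff] at hadj
  obtain ⟨-, hrel | hrel⟩ := hadj
  · cases n with
    | inl s => exact absurd hrel (rel_to_inl _ _)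
    | inr q =>
      obtain ⟨⟨a', b', i', j'⟩, h'⟩ := q
      rw [rel_inr_inr] at hrel
      obtain ⟨ha, hb, hc⟩ := hrel
      simp only at ha hb hc
      subst ha hb
      rcases hc with ⟨hi, hA⟩ | ⟨hi, h5, h0⟩
      · subst hi
        exact Or.inr (Or.inr (Or.inl ⟨_, rfl, j', rfl, Or.inl hA⟩))
      · subst hi h5 h0
        exact Or.inr (Or.inr (Or.inr (Or.inl ⟨_, rfl, rfl, rfl⟩)))
  · cases n with
    | inl s =>
      rw [rel_inl_inr] at hrel
      simp only at hrel
      rcases hrel with ⟨h1, h2, h3⟩ | ⟨h1, h2, h3⟩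
      · subst h1; exact Or.inl ⟨rfl, h2, h3⟩
      · subst h1; exact Or.inr (Or.inl ⟨rfl, h2, h3⟩)
    | inr q =>
      obtain ⟨⟨a', b', i', j'⟩, h'⟩ := q
      rw [rel_inr_inr] at hrel
      obtain ⟨ha, hb, hc⟩ := hrel
      simp only at ha hb hc
      subst ha hb
      rcases hc with ⟨hi, hA⟩ | ⟨hi, h5, h0⟩
      · subst hi
        exact Or.inr (Or.inr (Or.inl ⟨_, rfl, j', rfl, Or.inr hA⟩))
      · subst h5 h0
        exact Or.inr (Or.inr (Or.inr (Or.inr ⟨_, rfl, i', hi, rfl, rfl⟩)))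
structure OuterData (G : SimpleGraph V) (x : Sym2 V → ℕ) (v : V) (W : GadgetVert G x) where
  P : GadgetVert G x
  Q : GadgetVert G x
  TP : GadgetVert G x
  TQ : GadgetVert G x
  S : GadgetVert G x
  adjWP : (gadgetGraph G x).Adj W P
  adjWQ : (gadgetGraph G x).Adj W Q
  adjPQ : (gadgetGraph G x).Adj P Q
  adjPTP : (gadgetGraph G x).Adj P TP
  adjQTQ : (gadgetGraph G x).Adj Q TQ
  adjTPS : (gadgetGraph G x).Adj TP S
  adjTQS : (gadgetGraph G x).Adj TQ S
  nbrW : ∀ n, (gadgetGraph G x).Adj W n → n = Sum.inl v ∨ n = P ∨ n = Q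
  nbrP : ∀ n, (gadgetGraph G x).Adj P n → n = W ∨ n = Q ∨ n = TP
  nbrQ : ∀ n, (gadgetGraph G x).Adj Q n → n = W ∨ n = P ∨ n = TQ
  nbrTP : ∀ n, (gadgetGraph G x).Adj TP n → n = P ∨ n = TQ ∨ n = S
  nbrTQ : ∀ n, (gadgetGraph G x).Adj TQ n → n = Q ∨ n = TP ∨ n = S
  extS : ∀ n m, (gadgetGraph G x).Adj S n → (gadgetGraph G x).Adj S m →
    n ≠ TP → n ≠ TQ → m ≠ TP → m ≠ TQ → n = m
  WiR : ∃ pp, W = Sum.inr pp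
  PiR : ∃ pp, P = Sum.inr pp
  QiR : ∃ pp, Q = Sum.inr pp
  TPiR : ∃ pp, TP = Sum.inr pp
  TQiR : ∃ pp, TQ = Sum.inr pp
  SiR : ∃ pp, S = Sum.inr pp
  neWTQ : W ≠ TQ
  neWTP : W ≠ TP
  nePTQ : P ≠ TQ
  neQTP : Q ≠ TP
  nePv : P ≠ Sum.inl v
  neQv : Q ≠ Sum.inl v

def OuterData.swap {v : V} {W : GadgetVert G x} (d : OuterData G x v W) : OuterData G x v W where
  P := d.Q
  Q := d.P
  TP := d.TQ
  TQ := d.TP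
  S := d.S
  adjWP := d.adjWQ
  adjWQ := d.adjWP
  adjPQ := d.adjPQ.symm
  adjPTP := d.adjQTQ
  adjQTQ := d.adjPTP
  adjTPS := d.adjTQS
  adjTQS := d.adjTPS
  nbrW := fun n h => by rcases d.nbrW n h with h | h | h <;> tauto
  nbrP := fun n h => by rcases d.nbrQ n h with h | h | h <;> tauto
  nbrQ := fun n h => by rcases d.nbrP n h with h | h | h <;> tauto
  nbrTP := fun n h => by rcases d.nbrTQ n h with h | h | h <;> tauto
  nbrTQ := fun n h => by rcases d.nbrTP n h with h | h | h <;> tauto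
  extS := fun n m h1 h2 n1 n2 m1 m2 => d.extS n m h1 h2 n2 n1 m2 m1
  WiR := d.WiR
  PiR := d.QiR
  QiR := d.PiR
  TPiR := d.TQiR
  TQiR := d.TPiR
  SiR := d.SiR
  neWTQ := d.neWTP
  neWTP := d.neWTQ
  nePTQ := fun h => d.neQTP h
  neQTP := fun h => d.nePTQ h
  nePv := d.neQv
  neQv := d.nePv
lemma outer_structure {v : V} {W : GadgetVert G x}
    (hW : (gadgetGraph G x).Adj (Sum.inl v) W) : Nonempty (OuterData G x v W) := by
  have e0 : ∀ jj : Fin 6, (AAdj 0 jj ∨ AAdj jj 0) → jj = 1 ∨ jj = 2 := by decide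
  have e1 : ∀ jj : Fin 6, (AAdj 1 jj ∨ AAdj jj 1) → jj = 0 ∨ jj = 2 ∨ jj = 3 := by decide
  have e2 : ∀ jj : Fin 6, (AAdj 2 jj ∨ AAdj jj 2) → jj = 0 ∨ jj = 1 ∨ jj = 4 := by decide
  have e3 : ∀ jj : Fin 6, (AAdj 3 jj ∨ AAdj jj 3) → jj = 1 ∨ jj = 4 ∨ jj = 5 := by decide
  have e4 : ∀ jj : Fin 6, (AAdj 4 jj ∨ AAdj jj 4) → jj = 2 ∨ jj = 3 ∨ jj = 5 := by decide
  have e5 : ∀ jj : Fin 6, (AAdj 5 jj ∨ AAdj jj 5) → jj = 3 ∨ jj = 4 := by decide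
  obtain ⟨⟨⟨a, b, i, j⟩, hab⟩, rfl, hcase⟩ := inl_adj_elim v W hW
  simp only at hcase
  rcases hcase with ⟨rfl, rfl, rfl⟩ | ⟨rfl, hi, rfl⟩
  · -- Case A : v = a, W is vertex 0 of first gadget of chain (a, b)
    set mk : Fin 6 → GadgetVert G x := fun jj => Sum.inr ⟨(a, b, 0, jj), hab⟩ with hmk
    have conv : ∀ (q : GadgetAux G x) (jj : Fin 6), q.1 = (a, b, 0, jj) → Sum.inr q = mk jj := by
      intro q jj h
      exact congrArg Sum.inr (Subtype.ext (by rw [h]))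
    have nemk : ∀ j1 j2 : Fin 6, j1 ≠ j2 → mk j1 ≠ mk j2 := by
      intro j1 j2 hne heq
      apply hne
      simpa [hmk, Prod.ext_iff] using heq
    have adjmk : ∀ j1 j2 : Fin 6, j1 ≠ j2 → (AAdj j1 j2 ∨ AAdj j2 j1) →
        (gadgetGraph G x).Adj (mk j1) (mk j2) := by
      intro j1 j2 hne hA
      rw [adj_iff]
      refine ⟨nemk j1 j2 hne, ?_⟩
      rcases hA with h | h
      · exact Or.inl ((rel_inr_inr _ _).mpr ⟨rfl, rfl, Or.inl ⟨rfl, h⟩⟩)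
      · exact Or.inr ((rel_inr_inr _ _).mpr ⟨rfl, rfl, Or.inl ⟨rfl, h⟩⟩)
    have nbr : ∀ (j0 : Fin 6) (n : GadgetVert G x), (gadgetGraph G x).Adj (mk j0) n →
        (n = Sum.inl a ∧ j0 = 0) ∨
        (n = Sum.inl b ∧ 0 = x s(a, b) - 1 ∧ j0 = 5) ∨
        (∃ j' : Fin 6, n = mk j' ∧ (AAdj j0 j' ∨ AAdj j' j0)) ∨
        (∃ q : GadgetAux G x, n = Sum.inr q ∧ q.1 = (a, b, 1, 0) ∧ j0 = 5) := by
      intro j0 n h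
      rcases gadget_adj_elim j0 n h with ⟨h1, -, h3⟩ | ⟨h1, h2, h3⟩ |
        ⟨q, hq, j', hq1, hA⟩ | ⟨q, hq, hq1, h5⟩ | ⟨-, -, i'', hii, -, -⟩
      · exact Or.inl ⟨h1, h3⟩
      · exact Or.inr (Or.inl ⟨h1, h2, h3⟩)
      · exact Or.inr (Or.inr (Or.inl ⟨j', by rw [hq]; exact conv q j' hq1, hA⟩))
      · exact Or.inr (Or.inr (Or.inr ⟨q, hq, hq1, h5⟩))
      · omega
    refine ⟨⟨mk 1, mk 2, mk 3, mk 4, mk 5, ?_, ?_, ?_, ?_, ?_, ?_, ?_, ?_, ?_, ?_, ?_, ?_, ?_,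
      ⟨_, rfl⟩, ⟨_, rfl⟩, ⟨_, rfl⟩, ⟨_, rfl⟩, ⟨_, rfl⟩, ⟨_, rfl⟩,
      nemk 0 4 (by decide), nemk 0 3 (by decide), nemk 1 4 (by decide), nemk 2 3 (by decide),
      by simp [hmk], by simp [hmk]⟩⟩
    · exact adjmk 0 1 (by decide) (by decide)
    · exact adjmk 0 2 (by decide) (by decide)
    · exact adjmk 1 2 (by decide) (by decide)
    · exact adjmk 1 3 (by decide) (by decide)
    · exact adjmk 2 4 (by decide) (by decide)
    · exact adjmk 3 5 (by decide) (by decide)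
    · exact adjmk 4 5 (by decide) (by decide)
    · -- nbrW
      intro n h
      rcases nbr 0 n h with ⟨h1, -⟩ | ⟨-, -, h50⟩ | ⟨j', hn, hA⟩ | ⟨-, -, -, h05⟩
      · exact Or.inl h1
      · exact absurd h50 (by decide)
      · rcases e0 j' hA with rfl | rfl
        · exact Or.inr (Or.inl hn)
        · exact Or.inr (Or.inr hn)
      · exact absurd h05 (by decide)
    · -- nbrP (mk 1)
      intro n h
      rcases nbr 1 n h with ⟨-, h10⟩ | ⟨-, -, h15⟩ | ⟨j', hn, hA⟩ | ⟨-, -, -, h15⟩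
      · exact absurd h10 (by decide)
      · exact absurd h15 (by decide)
      · rcases e1 j' hA with rfl | rfl | rfl
        · exact Or.inl hn
        · exact Or.inr (Or.inl hn)
        · exact Or.inr (Or.inr hn)
      · exact absurd h15 (by decide)
    · -- nbrQ (mk 2)
      intro n h
      rcases nbr 2 n h with ⟨-, h20⟩ | ⟨-, -, h25⟩ | ⟨j', hn, hA⟩ | ⟨-, -, -, h25⟩
      · exact absurd h20 (by decide)
      · exact absurd h25 (by decide)
      · rcases e2 j' hA with rfl | rfl | rfl
        · exact Or.inl hn
        · exact Or.inr (Or.inl hn)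
        · exact Or.inr (Or.inr hn)
      · exact absurd h25 (by decide)
    · -- nbrTP (mk 3) : {1, 4, 5} = P, TQ, S
      intro n h
      rcases nbr 3 n h with ⟨-, h30⟩ | ⟨-, -, h35⟩ | ⟨j', hn, hA⟩ | ⟨-, -, -, h35⟩
      · exact absurd h30 (by decide)
      · exact absurd h35 (by decide)
      · rcases e3 j' hA with rfl | rfl | rfl
        · exact Or.inl hn
        · exact Or.inr (Or.inl hn)
        · exact Or.inr (Or.inr hn)
      · exact absurd h35 (by decide)
    · -- nbrTQ (mk 4) : {2, 3, 5} = Q, TP, S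
      intro n h
      rcases nbr 4 n h with ⟨-, h40⟩ | ⟨-, -, h45⟩ | ⟨j', hn, hA⟩ | ⟨-, -, -, h45⟩
      · exact absurd h40 (by decide)
      · exact absurd h45 (by decide)
      · rcases e4 j' hA with rfl | rfl | rfl
        · exact Or.inl hn
        · exact Or.inr (Or.inl hn)
        · exact Or.inr (Or.inr hn)
      · exact absurd h45 (by decide)
    · -- extS (mk 5)
      intro n m h1 h2 hn3 hn4 hm3 hm4
      have red : ∀ nn : GadgetVert G x, (gadgetGraph G x).Adj (mk 5) nn → nn ≠ mk 3 → nn ≠ mk 4 →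
          (nn = Sum.inl b ∧ 0 = x s(a, b) - 1) ∨
          (∃ q : GadgetAux G x, nn = Sum.inr q ∧ q.1 = (a, b, 1, 0)) := by
        intro nn hh hh3 hh4
        rcases nbr 5 nn hh with ⟨-, h50⟩ | ⟨hb', hx, -⟩ | ⟨j', hn', hA⟩ | ⟨q, hq, hq1, -⟩
        · exact absurd h50 (by decide)
        · exact Or.inl ⟨hb', hx⟩
        · rcases e5 j' hA with rfl | rfl
          · exact absurd hn' hh3
          · exact absurd hn' hh4
        · exact Or.inr ⟨q, hq, hq1⟩
      rcases red n h1 hn3 hn4 with ⟨hn', hx⟩ | ⟨q, hq, hq1⟩ <;>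
        rcases red m h2 hm3 hm4 with ⟨hm', hx'⟩ | ⟨q', hq', hq1'⟩
      · rw [hn', hm']
      · exfalso
        have hxq : (1 : ℕ) < x s(a, b) := by
          have := q'.2.2.2
          rw [hq1'] at this
          exact this
        have := hab.2.2
        omega
      · exfalso
        have hxq : (1 : ℕ) < x s(a, b) := by
          have := q.2.2.2
          rw [hq1] at this
          exact this
        have := hab.2.2
        omega
      · rw [hq, hq']
        exact congrArg Sum.inr (Subtype.ext (by rw [hq1, hq1']))
  · -- Case B : v = b, W is vertex 5 of last gadget of chain (a, v)
    set mk : Fin 6 → GadgetVert G x := fun jj => Sum.inr ⟨(a, b, i, jj), hab⟩ with hmk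
    have conv : ∀ (q : GadgetAux G x) (jj : Fin 6), q.1 = (a, b, i, jj) → Sum.inr q = mk jj := by
      intro q jj h
      exact congrArg Sum.inr (Subtype.ext (by rw [h]))
    have nemk : ∀ j1 j2 : Fin 6, j1 ≠ j2 → mk j1 ≠ mk j2 := by
      intro j1 j2 hne heq
      apply hne
      simpa [hmk, Prod.ext_iff] using heq
    have adjmk : ∀ j1 j2 : Fin 6, j1 ≠ j2 → (AAdj j1 j2 ∨ AAdj j2 j1) →
        (gadgetGraph G x).Adj (mk j1) (mk j2) := by
      intro j1 j2 hne hA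
      rw [adj_iff]
      refine ⟨nemk j1 j2 hne, ?_⟩
      rcases hA with h | h
      · exact Or.inl ((rel_inr_inr _ _).mpr ⟨rfl, rfl, Or.inl ⟨rfl, h⟩⟩)
      · exact Or.inr ((rel_inr_inr _ _).mpr ⟨rfl, rfl, Or.inl ⟨rfl, h⟩⟩)
    have nbr : ∀ (j0 : Fin 6) (n : GadgetVert G x), (gadgetGraph G x).Adj (mk j0) n →
        (n = Sum.inl a ∧ i = 0 ∧ j0 = 0) ∨
        (n = Sum.inl b ∧ j0 = 5) ∨
        (∃ j' : Fin 6, n = mk j' ∧ (AAdj j0 j' ∨ AAdj j' j0)) ∨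
        (∃ q : GadgetAux G x, n = Sum.inr q ∧ q.1 = (a, b, i + 1, 0) ∧ j0 = 5) ∨
        (∃ q : GadgetAux G x, n = Sum.inr q ∧ ∃ i'' : ℕ, i = i'' + 1 ∧ q.1 = (a, b, i'', 5) ∧ j0 = 0) := by
      intro j0 n h
      rcases gadget_adj_elim j0 n h with ⟨h1, h2, h3⟩ | ⟨h1, -, h3⟩ |
        ⟨q, hq, j', hq1, hA⟩ | ⟨q, hq, hq1, h5⟩ | ⟨q, hq, i'', hii, hq1, h0⟩
      · exact Or.inl ⟨h1, h2, h3⟩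
      · exact Or.inr (Or.inl ⟨h1, h3⟩)
      · exact Or.inr (Or.inr (Or.inl ⟨j', by rw [hq]; exact conv q j' hq1, hA⟩))
      · exact Or.inr (Or.inr (Or.inr (Or.inl ⟨q, hq, hq1, h5⟩)))
      · exact Or.inr (Or.inr (Or.inr (Or.inr ⟨q, hq, i'', hii, hq1, h0⟩)))
    have hnolast : ∀ (q : GadgetAux G x), q.1 = (a, b, i + 1, 0) → False := by
      intro q hq1
      have hxq := q.2.2.2
      rw [hq1] at hxq
      simp only at hxq
      have h22 := hab.2.2
      simp only at h22
      omega
    refine ⟨⟨mk 4, mk 3, mk 2, mk 1, mk 0, ?_, ?_, ?_, ?_, ?_, ?_, ?_, ?_, ?_, ?_, ?_, ?_, ?_,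
      ⟨_, rfl⟩, ⟨_, rfl⟩, ⟨_, rfl⟩, ⟨_, rfl⟩, ⟨_, rfl⟩, ⟨_, rfl⟩,
      nemk 5 1 (by decide), nemk 5 2 (by decide), nemk 4 1 (by decide), nemk 3 2 (by decide),
      by simp [hmk], by simp [hmk]⟩⟩
    · exact adjmk 5 4 (by decide) (by decide)
    · exact adjmk 5 3 (by decide) (by decide)
    · exact adjmk 4 3 (by decide) (by decide)
    · exact adjmk 4 2 (by decide) (by decide)
    · exact adjmk 3 1 (by decide) (by decide)
    · exact adjmk 2 0 (by decide) (by decide)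
    · exact adjmk 1 0 (by decide) (by decide)
    · -- nbrW (mk 5) : inl v, P = mk 4, Q = mk 3
      intro n h
      rcases nbr 5 n h with ⟨-, -, h50⟩ | ⟨h1, -⟩ | ⟨j', hn, hA⟩ | ⟨q, -, hq1, -⟩ | ⟨-, -, -, -, -, h50⟩
      · exact absurd h50 (by decide)
      · exact Or.inl h1
      · rcases e5 j' hA with rfl | rfl
        · exact Or.inr (Or.inr hn)
        · exact Or.inr (Or.inl hn)
      · exact absurd hq1 (fun hh => hnolast _ hh)
      · exact absurd h50 (by decide)
    · -- nbrP (mk 4) : {2,3,5} = TP, Q, W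
      intro n h
      rcases nbr 4 n h with ⟨-, -, h40⟩ | ⟨-, h45⟩ | ⟨j', hn, hA⟩ | ⟨-, -, -, h45⟩ | ⟨-, -, -, -, -, h40⟩
      · exact absurd h40 (by decide)
      · exact absurd h45 (by decide)
      · rcases e4 j' hA with rfl | rfl | rfl
        · exact Or.inr (Or.inr hn)
        · exact Or.inr (Or.inl hn)
        · exact Or.inl hn
      · exact absurd h45 (by decide)
      · exact absurd h40 (by decide)
    · -- nbrQ (mk 3) : {1,4,5} = TQ, P, W
      intro n h
      rcases nbr 3 n h with ⟨-, -, h30⟩ | ⟨-, h35⟩ | ⟨j', hn, hA⟩ | ⟨-, -, -, h35⟩ | ⟨-, -, -, -, -, h30⟩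
      · exact absurd h30 (by decide)
      · exact absurd h35 (by decide)
      · rcases e3 j' hA with rfl | rfl | rfl
        · exact Or.inr (Or.inr hn)
        · exact Or.inr (Or.inl hn)
        · exact Or.inl hn
      · exact absurd h35 (by decide)
      · exact absurd h30 (by decide)
    · -- nbrTP (mk 2) : {0,1,4} = S, TQ, P
      intro n h
      rcases nbr 2 n h with ⟨-, -, h20⟩ | ⟨-, h25⟩ | ⟨j', hn, hA⟩ | ⟨-, -, -, h25⟩ | ⟨-, -, -, -, -, h20⟩
      · exact absurd h20 (by decide)
      · exact absurd h25 (by decide)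
      · rcases e2 j' hA with rfl | rfl | rfl
        · exact Or.inr (Or.inr hn)
        · exact Or.inr (Or.inl hn)
        · exact Or.inl hn
      · exact absurd h25 (by decide)
      · exact absurd h20 (by decide)
    · -- nbrTQ (mk 1) : {0,2,3} = S, TP, Q
      intro n h
      rcases nbr 1 n h with ⟨-, -, h10⟩ | ⟨-, h15⟩ | ⟨j', hn, hA⟩ | ⟨-, -, -, h15⟩ | ⟨-, -, -, -, -, h10⟩
      · exact absurd h10 (by decide)
      · exact absurd h15 (by decide)
      · rcases e1 j' hA with rfl | rfl | rfl
        · exact Or.inr (Or.inr hn)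
        · exact Or.inr (Or.inl hn)
        · exact Or.inl hn
      · exact absurd h15 (by decide)
      · exact absurd h10 (by decide)
    · -- extS (mk 0)
      intro n m h1 h2 hn3 hn4 hm3 hm4
      have red : ∀ nn : GadgetVert G x, (gadgetGraph G x).Adj (mk 0) nn → nn ≠ mk 2 → nn ≠ mk 1 →
          (nn = Sum.inl a ∧ i = 0) ∨
          (∃ q : GadgetAux G x, nn = Sum.inr q ∧ ∃ i'' : ℕ, i = i'' + 1 ∧ q.1 = (a, b, i'', 5)) := by
        intro nn hh hh2 hh1
        rcases nbr 0 nn hh with ⟨ha', hi0, -⟩ | ⟨-, h05⟩ | ⟨j', hn', hA⟩ | ⟨-, -, -, h05⟩ |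
          ⟨q, hq, i'', hii, hq1, -⟩
        · exact Or.inl ⟨ha', hi0⟩
        · exact absurd h05 (by decide)
        · rcases e0 j' hA with rfl | rfl
          · exact absurd hn' hh1
          · exact absurd hn' hh2
        · exact absurd h05 (by decide)
        · exact Or.inr ⟨q, hq, i'', hii, hq1⟩
      rcases red n h1 hn3 hn4 with ⟨hn', hi0⟩ | ⟨q, hq, i1, hii1, hq1⟩ <;>
        rcases red m h2 hm3 hm4 with ⟨hm', hi0'⟩ | ⟨q', hq', i2, hii2, hq1'⟩
      · rw [hn', hm']
      · exfalso; omega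
      · exfalso; omega
      · rw [hq, hq']
        refine congrArg Sum.inr (Subtype.ext ?_)
        rw [hq1, hq1']
        have : i1 = i2 := by omega
        rw [this]
lemma memN {a b : GadgetVert G x} (h : (gadgetGraph G x).Adj a b) :
    b ∈ insert a ((gadgetGraph G x).neighborSet a) :=
  Set.mem_insert_of_mem _ h

lemma final_contra {r : ℕ} {χ : GadgetVert G x → ℕ}
    (hχ2 : Dist2Coloring G x χ) (hχc : EdgeConsistent G x r χ)
    {v : V} {W : GadgetVert G x} (hvW : (gadgetGraph G x).Adj (Sum.inl v) W)
    (d : OuterData G x v W)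
    (hgT : inGball G x r (Sum.inl v) d.TP) (hgS : inGball G x r W d.S)
    (hχT : χ d.TP = χ (Sum.inl v))
    (hχPW : χ d.P ≠ χ W) (hχPv : χ d.P ≠ χ (Sum.inl v)) (hχQv : χ d.Q ≠ χ (Sum.inl v)) :
    False := by
  obtain ⟨n, hTn, hχn⟩ := hχc (Sum.inl v) W hvW d.TP hgT hχT
  have hχS : χ d.S = χ W := by
    rcases d.nbrTP n hTn with rfl | rfl | rfl
    · exact absurd hχn hχPW
    · exact absurd (hχ2 d.Q (memN d.adjQTQ) (memN d.adjWQ.symm) hχn) (fun h => d.neWTQ h.symm)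
    · exact hχn
  obtain ⟨n1, hSn1, hχn1⟩ := hχc W d.P d.adjWP d.S hgS hχS
  obtain ⟨n2, hSn2, hχn2⟩ := hχc W d.Q d.adjWQ d.S hgS hχS
  have hn1TP : n1 ≠ d.TP := by
    rintro rfl
    exact hχPv (by rw [← hχn1, hχT])
  have hn1TQ : n1 ≠ d.TQ := by
    rintro rfl
    exact d.nePTQ (hχ2 d.Q (memN d.adjPQ.symm) (memN d.adjQTQ) hχn1.symm)
  have hn2TP : n2 ≠ d.TP := by
    rintro rfl
    exact hχQv (by rw [← hχn2, hχT])
  have hn2TQ : n2 ≠ d.TQ := by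
    rintro rfl
    exact d.adjQTQ.ne' (hχ2 d.Q (memN d.adjQTQ) (Set.mem_insert _ _) hχn2)
  have heq := d.extS n1 n2 hSn1 hSn2 hn1TP hn1TQ hn2TP hn2TQ
  have hPQ : χ d.P = χ d.Q := by rw [← hχn1, heq, hχn2]
  exact d.adjPQ.ne (hχ2 d.P (Set.mem_insert _ _) (memN d.adjPQ) hPQ)

theorem stmt2 (G : SimpleGraph V) (x : Sym2 V → ℕ) (r : ℕ) (hr : 0 < r)
    (hgad : CorrectlyGadgeted G x r)
    (χ : GadgetVert G x → ℕ)
    (hχ2 : Dist2Coloring G x χ)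
    (hχc : EdgeConsistent G x r χ)
    (v : V) :
    ¬ ∃ u₁ u₂ u₃ : GadgetVert G x,
        inGball G x r (Sum.inl v) u₁ ∧ inGball G x r (Sum.inl v) u₂ ∧
        inGball G x r (Sum.inl v) u₃ ∧
        (gadgetGraph G x).Adj u₁ u₂ ∧ (gadgetGraph G x).Adj u₁ u₃ ∧
        (gadgetGraph G x).Adj u₂ u₃ ∧ χ u₁ = χ (Sum.inl v) := by
  rintro ⟨u₁, u₂, u₃, hb1, hb2, hb3, h12, h13, h23, hχ1⟩
  obtain ⟨p₂, rfl⟩ : ∃ p, u₂ = Sum.inr p := by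
    cases u₂ with
    | inl w => exact absurd h13 (fun h => no_triangle_original w u₁ u₃ h12.symm h23 h)
    | inr p => exact ⟨p, rfl⟩
  have hrev : gdist G x u₁ (Sum.inl v) ≤ (r : ℝ≥0∞) := by
    rw [gdist_comm]; exact hb1
  obtain ⟨Wi, hvWi, hχWi⟩ := hχc u₁ (Sum.inr p₂) h12 (Sum.inl v) hrev hχ1.symm
  obtain ⟨Wj, hvWj, hχWj⟩ := hχc u₁ u₃ h13 (Sum.inl v) hrev hχ1.symm
  have hχWine : χ Wi ≠ χ (Sum.inl v) := fun h =>
    hvWi.ne (hχ2 (Sum.inl v) (memN hvWi) (Set.mem_insert _ _) h).symm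
  have hχWjne : χ Wj ≠ χ (Sum.inl v) := fun h =>
    hvWj.ne (hχ2 (Sum.inl v) (memN hvWj) (Set.mem_insert _ _) h).symm
  have hne23 : χ (Sum.inr p₂) ≠ χ u₃ := fun h =>
    h23.ne (hχ2 u₁ (memN h12) (memN h13) h)
  -- walk of weight ≤ (2r-1)/2 from inl v to u₂
  obtain ⟨pw, hpw⟩ := exists_walk_small hr hb2
  have hone : (1 : ℝ≥0∞) ≤ (r : ℝ≥0∞) := by exact_mod_cast hr
  have hu2Wi : inGball G x r (Sum.inr p₂) Wi := by
    have hle := gdist_le (pw.reverse.append (Walk.cons hvWi Walk.nil))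
    rw [wWeight_append, wWeight_reverse, wWeight_cons, wWeight_nil, add_zero, wt_inl_left] at hle
    refine le_trans hle ?_
    refine le_trans (add_le_add hpw (le_refl _)) ?_
    rw [ENNReal.div_add_div_same]
    have h21 : (2 * r - 1 : ℕ) + 1 = 2 * r := by omega
    have hcast : ((2 * r - 1 : ℕ) : ℝ≥0∞) + 1 = ((2 * r : ℕ) : ℝ≥0∞) := by
      exact_mod_cast congrArg (Nat.cast : ℕ → ℝ≥0∞) h21
    rw [hcast, two_cast_div]
  obtain ⟨E, hWiE, hχE⟩ := hχc (Sum.inr p₂) u₃ h23 Wi hu2Wi hχWi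
  obtain ⟨d⟩ := outer_structure hvWi
  obtain ⟨pi, hWipi⟩ := d.WiR
  obtain ⟨qj, rfl, -⟩ := inl_adj_elim v Wj hvWj
  have key : ∀ d' : OuterData G x v Wi, E = d'.P → False := by
    intro d' hEP
    subst hEP
    have hχP : χ d'.P = χ u₃ := hχE
    obtain ⟨pp, hPinr⟩ := d'.PiR
    obtain ⟨pt, hTinr⟩ := d'.TPiR
    obtain ⟨ps, hSinr⟩ := d'.SiR
    have wjE : inGball G x r (Sum.inr qj) d'.P := by
      have hle := gdist_le (Walk.cons hvWj.symm (Walk.cons hvWi (Walk.cons d'.adjWP Walk.nil)))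
      rw [wWeight_cons, wWeight_cons, wWeight_cons, wWeight_nil, add_zero] at hle
      rw [wt_inr_inl, wt_inl_left, wt_zero_of_inr ⟨pi, hWipi⟩ d'.PiR, add_zero] at hle
      refine le_trans hle (le_trans (le_of_eq (ENNReal.add_halves 1)) hone)
    obtain ⟨y, hEy, hχy⟩ := hχc (Sum.inr qj) (Sum.inl v) hvWj.symm d'.P wjE
      (hχP.trans hχWj.symm)
    rcases d'.nbrP y hEy with rfl | rfl | rfl
    · exact hχWine hχy
    · exact d'.neQv (hχ2 Wi (memN d'.adjWQ) (memN hvWi.symm) hχy)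
    · refine final_contra hχ2 hχc hvWi d' ?_ ?_ hχy ?_ ?_ ?_
      · -- inGball (inl v) TP : walk v → Wi → P → TP of weight 1/2
        have hle := gdist_le (Walk.cons hvWi (Walk.cons d'.adjWP (Walk.cons d'.adjPTP Walk.nil)))
        rw [wWeight_cons, wWeight_cons, wWeight_cons, wWeight_nil, add_zero, wt_inl_left,
          wt_zero_of_inr ⟨pi, hWipi⟩ d'.PiR, wt_zero_of_inr d'.PiR d'.TPiR,
          add_zero, add_zero] at hle
        refine le_trans hle (le_trans ?_ hone)
        exact le_trans (ENNReal.half_le_self) (le_refl 1)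
      · -- inGball Wi S : weight-0 walk
        have hle := gdist_le (Walk.cons d'.adjWP (Walk.cons d'.adjPTP (Walk.cons d'.adjTPS Walk.nil)))
        rw [wWeight_cons, wWeight_cons, wWeight_cons, wWeight_nil, add_zero,
          wt_zero_of_inr ⟨pi, hWipi⟩ d'.PiR, wt_zero_of_inr d'.PiR d'.TPiR,
          wt_zero_of_inr d'.TPiR d'.SiR, add_zero, add_zero] at hle
        exact le_trans hle (by simp)
      · exact fun h => hne23 (by rw [← hχWi, ← h, hχP])
      · exact fun h => hχWjne (by rw [hχWj, ← hχP]; exact h)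
      · exact fun h => d'.neQv (hχ2 Wi (memN d'.adjWQ) (memN hvWi.symm) h)
  rcases d.nbrW E hWiE with rfl | hEP | hEQ
  · exact hχWjne (by rw [hχWj, ← hχE])
  · exact key d hEP
  · exact key d.swap hEQ


end LCLGadgetThms
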